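/- In ℓ₁(Γ) for an arbitrary index set Γ, the spear vectors are exactly the vectors of the form θ·e_γ where θ is a modulus-one scalar and e_γ is the canonical basis vector supported at γ ∈ Γ. -/

import Mathlib

/-- A spear vector: `z ∈ S_X` with `‖z + 𝕋x‖ = 1 + ‖x‖` for every `x ∈ X`. -/
def IsSpear (𝕜 : Type*) {X : Type*} [RCLike 𝕜] [NormedAddCommGroup X]
    [NormedSpace 𝕜 X] (z : X) : Prop :=
  ‖z‖ = 1 ∧ ∀ x : X, sSup {r : ℝ | ∃ ω : 𝕜, ‖ω‖ = 1 ∧ r = ‖z + ω • x‖} = 1 + ‖x‖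

section Aux

variable {𝕜 Γ : Type*} [RCLike 𝕜] [DecidableEq Γ]

private lemma l1_norm (f : lp (fun _ : Γ => 𝕜) 1) : ‖f‖ = ∑' γ, ‖f γ‖ := by
  have := lp.norm_eq_tsum_rpow (p := 1) (by norm_num) f
  simpa using this

private lemma l1_summable (f : lp (fun _ : Γ => 𝕜) 1) : Summable fun γ => ‖f γ‖ := by
  have := (lp.memℓp f).summable (p := 1) (by norm_num)
  simpa using this

private lemma coord_eq (f g : lp (fun _ : Γ => 𝕜) 1)
    (h : ‖f + g‖ = ‖f‖ + ‖g‖) (γ : Γ) : ‖f γ + g γ‖ = ‖f γ‖ + ‖g γ‖ := by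
  by_contra hne
  have hlt : ‖f γ + g γ‖ < ‖f γ‖ + ‖g γ‖ := lt_of_le_of_ne (norm_add_le _ _) hne
  have hsf := l1_summable f
  have hsg := l1_summable g
  have hfg : Summable fun γ => ‖(f + g) γ‖ := l1_summable (f + g)
  have key : (∑' γ, ‖(f + g) γ‖) < ∑' γ, (‖f γ‖ + ‖g γ‖) := by
    refine Summable.tsum_lt_tsum (i := γ) (fun γ' => ?_) ?_ hfg (hsf.add hsg)
    · simp only [lp.coeFn_add, Pi.add_apply]
      exact norm_add_le _ _
    · simpa only [lp.coeFn_add, Pi.add_apply] using hlt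
  rw [← l1_norm (f + g), Summable.tsum_add hsf hsg, ← l1_norm f, ← l1_norm g, h] at key
  exact lt_irrefl _ key

private lemma aligned (a b : 𝕜) (ha : a ≠ 0) (hb : b ≠ 0)
    (h : ‖a + b‖ = ‖a‖ + ‖b‖) : ∃ r : ℝ, 0 < r ∧ (r : 𝕜) * a = b := by
  letI : InnerProductSpace ℝ 𝕜 := InnerProductSpace.rclikeToReal 𝕜 𝕜
  have hs : SameRay ℝ a b := sameRay_iff_norm_add.mpr h
  obtain ⟨r, hr, hra⟩ := hs.exists_pos_left ha hb
  refine ⟨r, hr, ?_⟩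
  rw [← hra]
  with_unfolding_all rfl

private lemma spear_attained (z x : lp (fun _ : Γ => 𝕜) 1)
    (h : sSup {r : ℝ | ∃ ω : 𝕜, ‖ω‖ = 1 ∧ r = ‖z + ω • x‖} = 1 + ‖x‖) :
    ∃ ω : 𝕜, ‖ω‖ = 1 ∧ ‖z + ω • x‖ = 1 + ‖x‖ := by
  have hset : {r : ℝ | ∃ ω : 𝕜, ‖ω‖ = 1 ∧ r = ‖z + ω • x‖}
      = (fun ω : 𝕜 => ‖z + ω • x‖) '' Metric.sphere 0 1 := by
    ext r
    constructor
    · rintro ⟨ω, hω, rfl⟩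
      exact ⟨ω, mem_sphere_zero_iff_norm.mpr hω, rfl⟩
    · rintro ⟨ω, hω, rfl⟩
      exact ⟨ω, mem_sphere_zero_iff_norm.mp hω, rfl⟩
  have hc : IsCompact ((fun ω : 𝕜 => ‖z + ω • x‖) '' Metric.sphere 0 1) := by
    refine (isCompact_sphere (0 : 𝕜) 1).image ?_
    fun_prop
  have hne : ((fun ω : 𝕜 => ‖z + ω • x‖) '' Metric.sphere 0 1).Nonempty := by
    refine ⟨‖z + (1 : 𝕜) • x‖, 1, ?_, rfl⟩
    simp [mem_sphere_zero_iff_norm]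
  have hmem := hc.sSup_mem hne
  rw [← hset, h] at hmem
  obtain ⟨ω, hω, hωx⟩ := hmem
  exact ⟨ω, hω, hωx.symm⟩

end Aux

/-- in `ℓ₁(Γ)` the spear vectors are exactly the vectors `θ • e_γ`
with `θ` a modulus-one scalar and `e_γ` a canonical basis vector. -/
theorem stmt10 {𝕜 Γ : Type*} [RCLike 𝕜] [DecidableEq Γ]
    (z : lp (fun _ : Γ => 𝕜) 1) :
    IsSpear 𝕜 z ↔ ∃ θ : 𝕜, ∃ γ : Γ, ‖θ‖ = 1 ∧ z = θ • lp.single 1 γ 1 := by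
  constructor
  · rintro ⟨hz1, hz2⟩
    -- z ≠ 0, so some coordinate is nonzero
    have hz0 : z ≠ 0 := by
      intro h; rw [h, norm_zero] at hz1; norm_num at hz1
    have : ∃ γ₀ : Γ, z γ₀ ≠ 0 := by
      by_contra h
      push_neg at h
      exact hz0 (lp.ext (funext fun γ => by simpa using h γ))
    obtain ⟨γ₀, hγ₀⟩ := this
    -- all other coordinates vanish
    have hsupp : ∀ γ₁, γ₁ ≠ γ₀ → z γ₁ = 0 := by
      intro γ₁ hγ₁ne
      by_contra hγ₁
      set x : lp (fun _ : Γ => 𝕜) 1 :=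
        lp.single 1 γ₀ (z γ₀) - lp.single 1 γ₁ (z γ₁) with hx
      obtain ⟨ω, hω, hωx⟩ := spear_attained z x (hz2 x)
      have hωx0 : ω ≠ 0 := by
        intro h; rw [h, norm_zero] at hω; norm_num at hω
      have heq : ‖z + ω • x‖ = ‖z‖ + ‖ω • x‖ := by
        rw [hz1, norm_smul, hω, one_mul, hωx]
      have hx0 : x γ₀ = z γ₀ := by
        simp [hx, lp.coeFn_sub, lp.single_apply_self,
          lp.single_apply_ne 1 γ₁ _ (Ne.symm hγ₁ne), Pi.single_apply, Ne.symm hγ₁ne]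
      have hx1 : x γ₁ = -z γ₁ := by
        simp [hx, lp.coeFn_sub, lp.single_apply_self,
          lp.single_apply_ne 1 γ₀ _ hγ₁ne, Pi.single_apply, hγ₁ne]
      have hco := coord_eq z (ω • x) heq
      have hc0 := hco γ₀
      have hc1 := hco γ₁
      rw [lp.coeFn_smul, Pi.smul_apply, smul_eq_mul, hx0] at hc0
      rw [lp.coeFn_smul, Pi.smul_apply, smul_eq_mul, hx1] at hc1
      obtain ⟨r, hr, hra⟩ := aligned (z γ₀) (ω * z γ₀) hγ₀
        (mul_ne_zero hωx0 hγ₀) hc0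
      obtain ⟨s, hs, hsa⟩ := aligned (z γ₁) (ω * -z γ₁) hγ₁
        (by simpa using mul_ne_zero hωx0 (neg_ne_zero.mpr hγ₁)) hc1
      have hωr : ω = (r : 𝕜) := (mul_right_cancel₀ hγ₀ hra).symm
      have hωs : ω = ((-s : ℝ) : 𝕜) := by
        have h1 : (s : 𝕜) * z γ₁ = -(ω * z γ₁) := by rw [hsa]; ring
        have h2 : ((-s : ℝ) : 𝕜) * z γ₁ = ω * z γ₁ := by
          push_cast
          linear_combination -h1
        exact (mul_right_cancel₀ hγ₁ h2).symm
      rw [hωr] at hωs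
      have : r = -s := by exact_mod_cast hωs
      linarith
    -- conclude z = (z γ₀) • e_{γ₀}
    refine ⟨z γ₀, γ₀, ?_, ?_⟩
    · have : ‖z‖ = ∑' γ, ‖z γ‖ := l1_norm z
      rw [tsum_eq_single γ₀ (fun γ hγ => by rw [hsupp γ hγ, norm_zero])] at this
      rw [← this, hz1]
    · refine lp.ext (funext fun γ => ?_)
      by_cases hγ : γ = γ₀
      · subst hγ
        simp [lp.coeFn_smul, lp.single_apply_self]
      · simp [lp.coeFn_smul, lp.single_apply_ne 1 γ₀ _ hγ, hsupp γ hγ, Pi.single_apply, hγ]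
  · rintro ⟨θ, γ, hθ, rfl⟩
    have hnormz : ‖θ • (lp.single 1 γ (1 : 𝕜) : lp (fun _ : Γ => 𝕜) 1)‖ = 1 := by
      rw [norm_smul, hθ, one_mul]
      have := lp.norm_single (p := 1) (E := fun _ : Γ => 𝕜) (by norm_num) γ (1 : 𝕜)
      simpa using this
    refine ⟨hnormz, fun x => ?_⟩
    set z : lp (fun _ : Γ => 𝕜) 1 := θ • lp.single 1 γ (1 : 𝕜) with hzdef
    have hzγ : z γ = θ := by
      simp [hzdef, lp.coeFn_smul, lp.single_apply_self]
    have hzne : ∀ γ', γ' ≠ γ → z γ' = 0 := fun γ' hγ' => by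
      simp [hzdef, lp.coeFn_smul, lp.single_apply_ne 1 γ _ hγ', Pi.single_apply, hγ']
    -- upper bound
    have hub : ∀ r ∈ {r : ℝ | ∃ ω : 𝕜, ‖ω‖ = 1 ∧ r = ‖z + ω • x‖}, r ≤ 1 + ‖x‖ := by
      rintro r ⟨ω, hω, rfl⟩
      calc ‖z + ω • x‖ ≤ ‖z‖ + ‖ω • x‖ := norm_add_le _ _
        _ = 1 + ‖x‖ := by rw [hnormz, norm_smul, hω, one_mul]
    -- the maximizing ω
    set u : 𝕜 := if x γ = 0 then 1 else (‖x γ‖ : 𝕜) / x γ with hu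
    have hunorm : ‖u‖ = 1 := by
      rw [hu]
      split_ifs with h
      · simp
      · rw [norm_div, RCLike.norm_ofReal, abs_norm, div_self (norm_ne_zero_iff.mpr h)]
    have hux : u * x γ = (‖x γ‖ : 𝕜) := by
      rw [hu]
      split_ifs with h
      · simp [h]
      · field_simp
    set ω : 𝕜 := θ * u with hω
    have hωnorm : ‖ω‖ = 1 := by rw [hω, norm_mul, hθ, hunorm, one_mul]
    have hcoord : ∀ γ', ‖(z + ω • x) γ'‖ = (if γ' = γ then (1:ℝ) else 0) + ‖x γ'‖ := by
      intro γ'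
      have h1 : (z + ω • x) γ' = z γ' + ω * x γ' := by
        rw [lp.coeFn_add, Pi.add_apply]
        congr 1
      rw [h1]
      by_cases hγ' : γ' = γ
      · subst hγ'
        rw [if_pos rfl, hzγ, hω, mul_assoc, hux, ← mul_one_add, norm_mul, hθ, one_mul]
        rw [← RCLike.ofReal_one, ← RCLike.ofReal_add, RCLike.norm_ofReal,
          abs_of_nonneg (by positivity)]
      · rw [if_neg hγ', hzne γ' hγ', zero_add, zero_add, norm_mul, hωnorm, one_mul]
    have hval : ‖z + ω • x‖ = 1 + ‖x‖ := by
      rw [l1_norm (z + ω • x)]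
      have hsum1 : Summable fun γ' : Γ => (if γ' = γ then (1:ℝ) else 0) :=
        (hasSum_ite_eq γ (1:ℝ)).summable
      calc (∑' γ', ‖(z + ω • x) γ'‖)
          = ∑' γ', ((if γ' = γ then (1:ℝ) else 0) + ‖x γ'‖) := by
            exact tsum_congr hcoord
        _ = (∑' γ', (if γ' = γ then (1:ℝ) else 0)) + ∑' γ', ‖x γ'‖ :=
            Summable.tsum_add hsum1 (l1_summable x)
        _ = 1 + ‖x‖ := by rw [tsum_ite_eq, ← l1_norm x]
    refine le_antisymm (csSup_le ⟨‖z + (1:𝕜) • x‖, 1, norm_one, rfl⟩ hub) ?_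
    rw [← hval]
    exact le_csSup ⟨1 + ‖x‖, hub⟩ ⟨ω, hωnorm, rfl⟩
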